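/- Let H be a class of functions h : Z → [0,1] and f : Z → [0,1] a fixed function. Suppose f is λ-close to H with respect to distributions S and T, i.e., inf_{h∈H}[ε_S(h,f) + ε_T(h,f)] ≤ λ, where ε_D(h,f) = E_{z∼D}|h(z) − f(z)|. Then for any h ∈ H and any h* ∈ H achieving ε_S(h*,f) + ε_T(h*,f) ≤ λ, the target error satisfies ε_T(h, f) ≤ λ + ε_S(h, f) + |ε_T(h*, h) − ε_S(h*, h)|. -/

import Mathlib

open MeasureTheory

lemma integrable_abs_sub {Z : Type*} [MeasurableSpace Z] (μ : Measure Z)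
    [IsProbabilityMeasure μ] {g₁ g₂ : Z → ℝ} (h₁ : Measurable g₁) (h₂ : Measurable g₂)
    (b₁ : ∀ z, g₁ z ∈ Set.Icc (0 : ℝ) 1) (b₂ : ∀ z, g₂ z ∈ Set.Icc (0 : ℝ) 1) :
    Integrable (fun z => |g₁ z - g₂ z|) μ := by
  apply Integrable.mono' (integrable_const (1 : ℝ))
    ((h₁.sub h₂).abs.aestronglyMeasurable)
  filter_upwards with z
  rw [Real.norm_eq_abs, abs_abs]
  have := b₁ z; have := b₂ z
  simp only [Set.mem_Icc] at *
  rw [Pi.sub_apply, abs_sub_le_iff]; constructor <;> linarith [this.1, this.2]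

/-- If `f` is `λ`-close to the class `H` (witnessed by `h⋆ ∈ H`), then for any `h ∈ H` the
target error satisfies `ε_T(h,f) ≤ λ + ε_S(h,f) + |ε_T(h⋆,h) − ε_S(h⋆,h)|`. -/
theorem stmt_10 {Z : Type*} [MeasurableSpace Z]
    (S T : Measure Z) [IsProbabilityMeasure S] [IsProbabilityMeasure T]
    (H : Set (Z → ℝ)) (f : Z → ℝ) (lam : ℝ)
    (hmf : Measurable f) (hbf : ∀ z, f z ∈ Set.Icc (0 : ℝ) 1)
    (hmH : ∀ h ∈ H, Measurable h) (hbH : ∀ h ∈ H, ∀ z, h z ∈ Set.Icc (0 : ℝ) 1)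
    (h hstar : Z → ℝ) (hh : h ∈ H) (hhstar : hstar ∈ H)
    (hclose : (∫ z, |hstar z - f z| ∂S) + (∫ z, |hstar z - f z| ∂T) ≤ lam) :
    ∫ z, |h z - f z| ∂T ≤
      lam + ∫ z, |h z - f z| ∂S +
        |(∫ z, |hstar z - h z| ∂T) - (∫ z, |hstar z - h z| ∂S)| := by
  have mh := hmH h hh
  have mhs := hmH hstar hhstar
  have bh := hbH h hh
  have bhs := hbH hstar hhstar
  have I1 : Integrable (fun z => |hstar z - f z|) T :=
    integrable_abs_sub T mhs hmf bhs hbf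
  have I2 : Integrable (fun z => |hstar z - h z|) T :=
    integrable_abs_sub T mhs mh bhs bh
  have I3 : Integrable (fun z => |hstar z - h z|) S :=
    integrable_abs_sub S mhs mh bhs bh
  have I4 : Integrable (fun z => |hstar z - f z|) S :=
    integrable_abs_sub S mhs hmf bhs hbf
  have I5 : Integrable (fun z => |h z - f z|) S :=
    integrable_abs_sub S mh hmf bh hbf
  -- step 1: ε_T(h,f) ≤ ε_T(h*,f) + ε_T(h*,h)
  have step1 : (∫ z, |h z - f z| ∂T) ≤ (∫ z, |hstar z - f z| ∂T) + ∫ z, |hstar z - h z| ∂T := by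
    rw [← integral_add I1 I2]
    apply integral_mono (integrable_abs_sub T mh hmf bh hbf) (I1.add I2)
    intro z
    calc |h z - f z| = |(hstar z - f z) - (hstar z - h z)| := by ring_nf
      _ ≤ |hstar z - f z| + |hstar z - h z| := abs_sub _ _
  -- step 2: ε_T(h*,h) ≤ ε_S(h*,h) + |diff|
  have step2 : (∫ z, |hstar z - h z| ∂T) ≤ (∫ z, |hstar z - h z| ∂S) +
      |(∫ z, |hstar z - h z| ∂T) - (∫ z, |hstar z - h z| ∂S)| := by
    have := abs_sub_abs_le_abs_sub (∫ z, |hstar z - h z| ∂T) (∫ z, |hstar z - h z| ∂S)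
    have h1 := le_abs_self ((∫ z, |hstar z - h z| ∂T) - ∫ z, |hstar z - h z| ∂S)
    linarith
  -- step 3: ε_S(h*,h) ≤ ε_S(h*,f) + ε_S(h,f)
  have step3 : (∫ z, |hstar z - h z| ∂S) ≤ (∫ z, |hstar z - f z| ∂S) + ∫ z, |h z - f z| ∂S := by
    rw [← integral_add I4 I5]
    apply integral_mono I3 (I4.add I5)
    intro z
    calc |hstar z - h z| = |(hstar z - f z) - (h z - f z)| := by ring_nf
      _ ≤ |hstar z - f z| + |h z - f z| := abs_sub _ _
  linarith
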